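/- arXiv:2504.10723 — 2 statements merged into one kernel-verified Lean document; each statement's English description precedes it below -/
import Mathlib

section
/- Let n ≥ 1, p ∈ (1, ∞), θ > 0, σ ∈ (θ, 1+θ), and set β = (2+θ)/(1+θ). Let B : B₁ → ℝⁿ and ϱ : B₁ → ℝ be bounded functions with sup-norms b := ‖B‖_{L^∞} and ρ₀ := ‖ϱ‖_{L^∞}, and let 𝔠₀ > 0. If 0 < κ < min{ 1, 𝔠₀^{1/θ} / ( β^{(1+θ)/θ} [ n − 1 + (β−1)(p−1) + b + β^{σ−(1+θ)} ρ₀ ]^{1/θ} ) }, then the function ψ(x) = κ|x|^β satisfies, for every x ∈ ℝⁿ with 0 < |x| < 1, the pointwise strict inequality |∇ψ(x)|^θ ( Δ_p^N ψ(x) + ⟨B(x), ∇ψ(x)⟩ ) + ϱ(x) |∇ψ(x)|^σ < 𝔠₀. -/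
open scoped RealInnerProductSpace
open Metric Filter
open scoped Topology
set_option maxHeartbeats 1000000

noncomputable section

/-- Euclidean space `ℝⁿ`. -/
abbrev E (n : ℕ) := EuclideanSpace ℝ (Fin n)

variable {n : ℕ}

/-- The Hessian of `u` at `x`, as a continuous linear map (derivative of the gradient). -/
def hess (u : E n → ℝ) (x : E n) : E n →L[ℝ] E n := fderiv ℝ (gradient u) x

/-- The Laplacian of `u` at `x` (trace of the Hessian). -/
def lap (u : E n → ℝ) (x : E n) : ℝ := LinearMap.trace ℝ (E n) (hess u x).toLinearMap

/-- The normalized (game-theoretic) `p`-Laplacian of `u` at `x`: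
`Δφ(x) + (p−2)|∇φ(x)|⁻²⟨D²φ(x)∇φ(x), ∇φ(x)⟩`. -/
def pLapN (p : ℝ) (u : E n → ℝ) (x : E n) : ℝ :=
  lap u x + (p - 2) * ⟪hess u x (gradient u x), gradient u x⟫ / ‖gradient u x‖ ^ 2

-- trace of rank-one map
lemma trace_smulRight' (f : E n →ₗ[ℝ] ℝ) (v : E n) :
    LinearMap.trace ℝ (E n) (f.smulRight v) = f v := by
  have h := LinearMap.trace_eq_contract_apply ℝ (E n) (f ⊗ₜ[ℝ] v)
  rw [contractLeft_apply] at h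
  rw [← h]
  congr 1

-- gradient of κ‖y‖^β at x ≠ 0
lemma hasGradientAt_pow (κ β : ℝ) (x : E n) (hx : x ≠ 0) :
    HasGradientAt (fun y : E n => κ * ‖y‖ ^ β)
      ((κ * β * (‖x‖ ^ 2) ^ (β / 2 - 1)) • x) x := by
  have hx0 : (0:ℝ) < ‖x‖ := norm_pos_iff.mpr hx
  have hx2 : (0:ℝ) < ‖x‖ ^ 2 := by positivity
  have h1 : HasFDerivAt (fun y : E n => ‖y‖ ^ 2) (2 • (innerSL ℝ x)) x :=
    (hasStrictFDerivAt_norm_sq x).hasFDerivAt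
  have h2 : HasDerivAt (fun t : ℝ => κ * t ^ (β / 2))
      (κ * (β / 2 * (‖x‖ ^ 2) ^ (β / 2 - 1))) (‖x‖ ^ 2) :=
    (Real.hasDerivAt_rpow_const (Or.inl hx2.ne')).const_mul κ
  have h3 := h2.comp_hasFDerivAt x h1
  have heq : (fun y : E n => κ * ‖y‖ ^ β) = fun y : E n => κ * (‖y‖ ^ 2) ^ (β / 2) := by
    funext y
    rw [← Real.rpow_natCast ‖y‖ 2, ← Real.rpow_mul (norm_nonneg y)]
    congr 1
    ring
  rw [hasGradientAt_iff_hasFDerivAt]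
  have htd : (InnerProductSpace.toDual ℝ (E n)) ((κ * β * (‖x‖ ^ 2) ^ (β / 2 - 1)) • x)
      = (κ * (β / 2 * (‖x‖ ^ 2) ^ (β / 2 - 1))) • (2 • (innerSL ℝ x)) := by
    ext y
    simp [InnerProductSpace.toDual_apply_apply, real_inner_smul_left]
    ring
  rw [heq, htd]
  exact h3

lemma gradient_pow_eq (κ β : ℝ) (x : E n) (hx : x ≠ 0) :
    gradient (fun y : E n => κ * ‖y‖ ^ β) x = (κ * β * (‖x‖ ^ 2) ^ (β / 2 - 1)) • x :=
  (hasGradientAt_pow κ β x hx).gradient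

lemma hess_pow_eq (κ β : ℝ) (x : E n) (hx : x ≠ 0) :
    hess (fun y : E n => κ * ‖y‖ ^ β) x =
      (κ * β * (‖x‖ ^ 2) ^ (β / 2 - 1)) • ContinuousLinearMap.id ℝ (E n)
      + ((κ * β * (β - 2) * (‖x‖ ^ 2) ^ (β / 2 - 2)) • innerSL ℝ x).smulRight x := by
  have hx0 : (0:ℝ) < ‖x‖ := norm_pos_iff.mpr hx
  have hx2 : (0:ℝ) < ‖x‖ ^ 2 := by positivity
  have hEq : gradient (fun y : E n => κ * ‖y‖ ^ β)
      =ᶠ[𝓝 x] fun y : E n => (κ * β * (‖y‖ ^ 2) ^ (β / 2 - 1)) • y := by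
    filter_upwards [IsOpen.mem_nhds isOpen_compl_singleton (by simpa using hx)] with y hy
    exact gradient_pow_eq κ β y (by simpa using hy)
  have h1 : HasFDerivAt (fun y : E n => ‖y‖ ^ 2) (2 • (innerSL ℝ x)) x :=
    (hasStrictFDerivAt_norm_sq x).hasFDerivAt
  have h2 : HasDerivAt (fun t : ℝ => κ * β * t ^ (β / 2 - 1))
      (κ * β * ((β / 2 - 1) * (‖x‖ ^ 2) ^ (β / 2 - 1 - 1))) (‖x‖ ^ 2) :=
    (Real.hasDerivAt_rpow_const (Or.inl hx2.ne')).const_mul (κ * β)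
  have hc : HasFDerivAt (fun y : E n => κ * β * (‖y‖ ^ 2) ^ (β / 2 - 1))
      ((κ * β * ((β / 2 - 1) * (‖x‖ ^ 2) ^ (β / 2 - 1 - 1))) • (2 • (innerSL ℝ x))) x :=
    by have := h2.comp_hasFDerivAt x h1; exact this
  have hG : HasFDerivAt (fun y : E n => (κ * β * (‖y‖ ^ 2) ^ (β / 2 - 1)) • y)
      ((κ * β * (‖x‖ ^ 2) ^ (β / 2 - 1)) • ContinuousLinearMap.id ℝ (E n)
        + ((κ * β * ((β / 2 - 1) * (‖x‖ ^ 2) ^ (β / 2 - 1 - 1)))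
            • (2 • (innerSL ℝ x))).smulRight x) x :=
    hc.smul (hasFDerivAt_id x)
  have : hess (fun y : E n => κ * ‖y‖ ^ β) x
      = (κ * β * (‖x‖ ^ 2) ^ (β / 2 - 1)) • ContinuousLinearMap.id ℝ (E n)
        + ((κ * β * ((β / 2 - 1) * (‖x‖ ^ 2) ^ (β / 2 - 1 - 1)))
            • (2 • (innerSL ℝ x))).smulRight x := by
    rw [hess, hEq.fderiv_eq, hG.fderiv]
  rw [this]
  congr 1
  ext y
  simp only [ContinuousLinearMap.smulRight_apply, ContinuousLinearMap.smul_apply,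
    innerSL_apply_apply, smul_smul, smul_eq_mul]
  have : β / 2 - 1 - 1 = β / 2 - 2 := by ring
  rw [this]
  ring_nf

lemma lap_pow_eq (κ β : ℝ) (x : E n) (hx : x ≠ 0) :
    lap (fun y : E n => κ * ‖y‖ ^ β) x =
      (κ * β * (‖x‖ ^ 2) ^ (β / 2 - 1)) * n
      + (κ * β * (β - 2) * (‖x‖ ^ 2) ^ (β / 2 - 2)) * ‖x‖ ^ 2 := by
  rw [lap, hess_pow_eq κ β x hx]
  set c := κ * β * (‖x‖ ^ 2) ^ (β / 2 - 1) with hc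
  set d := κ * β * (β - 2) * (‖x‖ ^ 2) ^ (β / 2 - 2) with hd
  have hcoe : ((c • ContinuousLinearMap.id ℝ (E n)
        + (d • innerSL ℝ x).smulRight x : E n →L[ℝ] E n) : E n →ₗ[ℝ] E n)
      = c • (LinearMap.id : E n →ₗ[ℝ] E n)
        + ((d • innerSL ℝ x : E n →L[ℝ] ℝ) : E n →ₗ[ℝ] ℝ).smulRight x := rfl
  rw [hcoe, map_add, map_smul, LinearMap.trace_id, trace_smulRight']
  have hrank : Module.finrank ℝ (E n) = n := finrank_euclideanSpace_fin
  rw [hrank]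
  simp only [ContinuousLinearMap.coe_coe, ContinuousLinearMap.smul_apply, innerSL_apply_apply,
    smul_eq_mul, real_inner_self_eq_norm_sq]
  try ring

lemma pLapN_pow_eq (p κ β : ℝ) (x : E n) (hx : x ≠ 0) (hκ : 0 < κ) (hβ : 0 < β) :
    pLapN p (fun y : E n => κ * ‖y‖ ^ β) x
      = κ * β * (‖x‖ ^ 2) ^ (β / 2 - 1) * (n - 1 + (β - 1) * (p - 1)) := by
  have hx0 : (0:ℝ) < ‖x‖ := norm_pos_iff.mpr hx
  have ht : (0:ℝ) < ‖x‖ ^ 2 := by positivity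
  have hcpos : (0:ℝ) < κ * β * (‖x‖ ^ 2) ^ (β / 2 - 1) := by positivity
  rw [pLapN, lap_pow_eq κ β x hx, gradient_pow_eq κ β x hx, hess_pow_eq κ β x hx]
  simp only [ContinuousLinearMap.add_apply, ContinuousLinearMap.smul_apply,
    ContinuousLinearMap.id_apply, ContinuousLinearMap.smulRight_apply, innerSL_apply_apply,
    inner_add_left, real_inner_smul_left, real_inner_smul_right,
    real_inner_self_eq_norm_sq, smul_smul, norm_smul, Real.norm_eq_abs, mul_pow, sq_abs]
  set t := ‖x‖ ^ 2 with hT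
  set a := t ^ (β / 2 - 1) with hA
  set v := t ^ (β / 2 - 2) with hV
  have hab : v * t = a := by
    rw [hV, hA, ← Real.rpow_add_one ht.ne']
    congr 1
    ring
  have hane : a ≠ 0 := by
    have : (0:ℝ) < a := Real.rpow_pos_of_pos ht _
    exact this.ne'
  rw [hT] at hab
  field_simp
  linear_combination ((2-2*p-β+β*p)*(κ^2*β^2*a)) * hab


/-- barrier computation (sublinear case). With `β = (2+θ)/(1+θ)` and
`0 < κ < min{1, 𝔠₀^{1/θ} / (β^{(1+θ)/θ}[n−1+(β−1)(p−1)+b+β^{σ−(1+θ)}ρ₀]^{1/θ})}`,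
the barrier `ψ(x) = κ|x|^β` satisfies
`|∇ψ|^θ(Δ_p^N ψ + ⟨B(x),∇ψ⟩) + ϱ(x)|∇ψ|^σ < 𝔠₀` pointwise in `B₁ \ {0}`. -/
theorem barrier_strict_subsolution
    (n : ℕ) (hn : 1 ≤ n) (p θ σ : ℝ) (hp : 1 < p) (hθ : 0 < θ)
    (hσ₁ : θ < σ) (hσ₂ : σ < 1 + θ)
    (B : E n → E n) (ϱ : E n → ℝ) (b ρ₀ c₀ κ : ℝ)
    (hb : 0 ≤ b) (hρ₀ : 0 ≤ ρ₀) (hc₀ : 0 < c₀)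
    (hB : ∀ x ∈ ball (0 : E n) 1, ‖B x‖ ≤ b)
    (hϱ : ∀ x ∈ ball (0 : E n) 1, |ϱ x| ≤ ρ₀)
    (hκ₀ : 0 < κ)
    (hκ : κ < min 1 (c₀ ^ (1 / θ) /
      (((2 + θ) / (1 + θ)) ^ ((1 + θ) / θ) *
        ((n : ℝ) - 1 + ((2 + θ) / (1 + θ) - 1) * (p - 1) + b +
          ((2 + θ) / (1 + θ)) ^ (σ - (1 + θ)) * ρ₀) ^ (1 / θ)))) :
    ∀ x : E n, x ≠ 0 → x ∈ ball (0 : E n) 1 →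
      ‖gradient (fun y : E n => κ * ‖y‖ ^ ((2 + θ) / (1 + θ))) x‖ ^ θ *
          (pLapN p (fun y : E n => κ * ‖y‖ ^ ((2 + θ) / (1 + θ))) x +
            ⟪B x, gradient (fun y : E n => κ * ‖y‖ ^ ((2 + θ) / (1 + θ))) x⟫) +
        ϱ x * ‖gradient (fun y : E n => κ * ‖y‖ ^ ((2 + θ) / (1 + θ))) x‖ ^ σ < c₀ := by
  intro x hx hxb
  set β : ℝ := (2 + θ) / (1 + θ) with hβdef
  have h1θ : (0:ℝ) < 1 + θ := by linarith
  have hβ1 : 1 < β := by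
    rw [hβdef, lt_div_iff₀ h1θ]; linarith
  have hβ0 : 0 < β := by linarith
  have hbprod : β * (1 + θ) = 2 + θ := by
    rw [hβdef]; field_simp
  -- basic point facts
  have hr0 : (0:ℝ) < ‖x‖ := norm_pos_iff.mpr hx
  have hr1 : ‖x‖ < 1 := by simpa using mem_ball_zero_iff.mp hxb
  set r : ℝ := ‖x‖ with hrdef
  -- quantities
  set A : ℝ := (n:ℝ) - 1 + (β - 1) * (p - 1) with hAdef
  set M : ℝ := A + b + β ^ (σ - (1 + θ)) * ρ₀ with hMdef
  have hA0 : 0 ≤ A := by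
    have : (1:ℝ) ≤ (n:ℝ) := by exact_mod_cast hn
    have h1 : 0 < (β - 1) * (p - 1) := mul_pos (by linarith) (by linarith)
    rw [hAdef]; nlinarith
  have hM0 : 0 < M := by
    have h1 : 0 < (β - 1) * (p - 1) := mul_pos (by linarith) (by linarith)
    have h2 : 0 ≤ β ^ (σ - (1 + θ)) * ρ₀ :=
      mul_nonneg (Real.rpow_nonneg hβ0.le _) hρ₀
    have : (1:ℝ) ≤ (n:ℝ) := by exact_mod_cast hn
    rw [hMdef, hAdef]; nlinarith
  have hκ1 : κ < 1 := lt_of_lt_of_le hκ (min_le_left _ _)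
  have hκR : κ < c₀ ^ (1 / θ) / (β ^ ((1 + θ) / θ) * M ^ (1 / θ)) :=
    lt_of_lt_of_le hκ (min_le_right _ _)
  -- rewrite gradient / pLapN
  rw [gradient_pow_eq κ β x hx, pLapN_pow_eq p κ β x hx hκ₀ hβ0]
  have hsq : ((r:ℝ) ^ 2) ^ (β / 2 - 1) = r ^ (β - 2) := by
    rw [← Real.rpow_natCast r 2, ← Real.rpow_mul hr0.le]
    congr 1; push_cast; ring
  rw [hsq]
  have hcpos : 0 < κ * β * r ^ (β - 2) :=
    mul_pos (mul_pos hκ₀ hβ0) (Real.rpow_pos_of_pos hr0 _)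
  have hstep : r ^ (β - 2) * r = r ^ (β - 1) := by
    nth_rewrite 2 [← Real.rpow_one r]
    rw [← Real.rpow_add hr0]; congr 1; ring
  have hnorm : ‖(κ * β * r ^ (β - 2)) • x‖ = κ * β * r ^ (β - 1) := by
    rw [norm_smul, Real.norm_eq_abs, abs_of_pos hcpos, ← hrdef, mul_assoc, hstep]
  rw [hnorm]
  set G : ℝ := κ * β * r ^ (β - 1) with hGdef
  have hG0 : 0 < G := mul_pos (mul_pos hκ₀ hβ0) (Real.rpow_pos_of_pos hr0 _)
  -- inner product bound
  have hinner : ⟪B x, (κ * β * r ^ (β - 2)) • x⟫ ≤ b * G := by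
    calc ⟪B x, (κ * β * r ^ (β - 2)) • x⟫ ≤ ‖B x‖ * ‖(κ * β * r ^ (β - 2)) • x‖ :=
          real_inner_le_norm _ _
      _ = ‖B x‖ * G := by rw [hnorm]
      _ ≤ b * G := mul_le_mul_of_nonneg_right (hB x hxb) hG0.le
  have hϱx : ϱ x ≤ ρ₀ := le_trans (le_abs_self _) (hϱ x hxb)
  -- first bound
  have step1 : G ^ θ * (κ * β * r ^ (β - 2) * A + ⟪B x, (κ * β * r ^ (β - 2)) • x⟫)
        + ϱ x * G ^ σ
      ≤ G ^ θ * (κ * β * r ^ (β - 2) * A + b * G) + ρ₀ * G ^ σ := by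
    gcongr
  -- algebraic identities
  have hGθ : G ^ θ = κ ^ θ * β ^ θ * (r ^ (β - 1)) ^ θ := by
    rw [hGdef, Real.mul_rpow (mul_nonneg hκ₀.le hβ0.le) (Real.rpow_nonneg hr0.le _),
      Real.mul_rpow hκ₀.le hβ0.le]
  have hGσ : G ^ σ = κ ^ σ * β ^ σ * (r ^ (β - 1)) ^ σ := by
    rw [hGdef, Real.mul_rpow (mul_nonneg hκ₀.le hβ0.le) (Real.rpow_nonneg hr0.le _),
      Real.mul_rpow hκ₀.le hβ0.le]
  have e1 : (r ^ (β - 1)) ^ θ * r ^ (β - 2) = 1 := by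
    rw [← Real.rpow_mul hr0.le, ← Real.rpow_add hr0]
    have : (β - 1) * θ + (β - 2) = 0 := by linear_combination hbprod
    rw [this, Real.rpow_zero]
  have e2 : (r ^ (β - 1)) ^ θ * r ^ (β - 1) = r := by
    rw [← Real.rpow_mul hr0.le, ← Real.rpow_add hr0]
    have : (β - 1) * θ + (β - 1) = 1 := by linear_combination hbprod
    rw [this, Real.rpow_one]
  have e3 : (r ^ (β - 1)) ^ σ ≤ 1 := by
    apply Real.rpow_le_one (Real.rpow_nonneg hr0.le _)
    · exact Real.rpow_le_one hr0.le hr1.le (by linarith)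
    · linarith
  have hβθ1 : β ^ (1 + θ) = β ^ θ * β := by
    rw [add_comm, Real.rpow_add hβ0, Real.rpow_one]
  have hβσ : β ^ σ = β ^ (1 + θ) * β ^ (σ - (1 + θ)) := by
    rw [← Real.rpow_add hβ0]; congr 1; ring
  -- key bounds
  have hκθ0 : 0 < κ ^ θ := Real.rpow_pos_of_pos hκ₀ _
  have hβθ0 : 0 < β ^ θ := Real.rpow_pos_of_pos hβ0 _
  have key1 : G ^ θ * (κ * β * r ^ (β - 2) * A + b * G)
      ≤ κ ^ θ * β ^ (1 + θ) * (A + b) := by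
    have t1 : G ^ θ * (κ * β * r ^ (β - 2) * A) = κ ^ θ * β ^ θ * (κ * β * A) := by
      rw [hGθ]; linear_combination (κ ^ θ * β ^ θ * κ * β * A) * e1
    have t2 : G ^ θ * (b * G) = κ ^ θ * β ^ θ * (κ * β * b * r) := by
      rw [hGθ, hGdef]; linear_combination (κ ^ θ * β ^ θ * κ * β * b) * e2
    have hin : κ * β * A + κ * β * b * r ≤ β * (A + b) := by
      have h1 : κ * β * A ≤ β * A := by
        nlinarith [mul_nonneg (mul_nonneg (by linarith : (0:ℝ) ≤ 1 - κ) hβ0.le) hA0]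
      have h2 : κ * β * b * r ≤ β * b := by
        have hκr : κ * r ≤ 1 := by nlinarith
        nlinarith [mul_nonneg (mul_nonneg hβ0.le hb) (by linarith : (0:ℝ) ≤ 1 - κ * r)]
      linarith
    calc G ^ θ * (κ * β * r ^ (β - 2) * A + b * G)
        = κ ^ θ * β ^ θ * (κ * β * A + κ * β * b * r) := by
          rw [mul_add, t1, t2]; ring
      _ ≤ κ ^ θ * β ^ θ * (β * (A + b)) := by
          exact mul_le_mul_of_nonneg_left hin (mul_pos hκθ0 hβθ0).le
      _ = κ ^ θ * β ^ (1 + θ) * (A + b) := by rw [hβθ1]; ring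
  have key2 : ρ₀ * G ^ σ ≤ κ ^ θ * β ^ (1 + θ) * (β ^ (σ - (1 + θ)) * ρ₀) := by
    have hκσθ : κ ^ σ ≤ κ ^ θ := Real.rpow_le_rpow_of_exponent_ge hκ₀ hκ1.le hσ₁.le
    have hβσ0 : 0 ≤ β ^ σ := Real.rpow_nonneg hβ0.le _
    calc ρ₀ * G ^ σ = ρ₀ * (κ ^ σ * β ^ σ * (r ^ (β - 1)) ^ σ) := by rw [hGσ]
      _ ≤ ρ₀ * (κ ^ σ * β ^ σ * 1) := by
          apply mul_le_mul_of_nonneg_left _ hρ₀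
          exact mul_le_mul_of_nonneg_left e3
            (mul_nonneg (Real.rpow_nonneg hκ₀.le _) hβσ0)
      _ = κ ^ σ * β ^ σ * ρ₀ := by ring
      _ ≤ κ ^ θ * β ^ σ * ρ₀ := by
          apply mul_le_mul_of_nonneg_right (mul_le_mul_of_nonneg_right hκσθ hβσ0) hρ₀
      _ = κ ^ θ * β ^ (1 + θ) * (β ^ (σ - (1 + θ)) * ρ₀) := by rw [hβσ]; ring
  -- final strict bound
  have key4 : κ ^ θ * β ^ (1 + θ) * M < c₀ := by
    have hβ1θ0 : 0 < β ^ ((1 + θ) / θ) := Real.rpow_pos_of_pos hβ0 _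
    have hM1θ0 : 0 < M ^ (1 / θ) := Real.rpow_pos_of_pos hM0 _
    have hRpos : 0 < c₀ ^ (1 / θ) / (β ^ ((1 + θ) / θ) * M ^ (1 / θ)) :=
      div_pos (Real.rpow_pos_of_pos hc₀ _) (mul_pos hβ1θ0 hM1θ0)
    have hlt : κ ^ θ < (c₀ ^ (1 / θ) / (β ^ ((1 + θ) / θ) * M ^ (1 / θ))) ^ θ :=
      Real.rpow_lt_rpow hκ₀.le hκR hθ
    have hRθ : (c₀ ^ (1 / θ) / (β ^ ((1 + θ) / θ) * M ^ (1 / θ))) ^ θ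
        = c₀ / (β ^ (1 + θ) * M) := by
      have hθne : θ ≠ 0 := hθ.ne'
      rw [Real.div_rpow (Real.rpow_nonneg hc₀.le _) (mul_pos hβ1θ0 hM1θ0).le,
        Real.mul_rpow hβ1θ0.le hM1θ0.le,
        ← Real.rpow_mul hc₀.le, ← Real.rpow_mul hβ0.le, ← Real.rpow_mul hM0.le,
        one_div, inv_mul_cancel₀ hθne, div_mul_cancel₀ _ hθne,
        Real.rpow_one, Real.rpow_one]
    rw [hRθ] at hlt
    have hden : 0 < β ^ (1 + θ) * M := mul_pos (Real.rpow_pos_of_pos hβ0 _) hM0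
    calc κ ^ θ * β ^ (1 + θ) * M = κ ^ θ * (β ^ (1 + θ) * M) := by ring
      _ < c₀ / (β ^ (1 + θ) * M) * (β ^ (1 + θ) * M) := by
          exact mul_lt_mul_of_pos_right hlt hden
      _ = c₀ := by field_simp
  calc G ^ θ * (κ * β * r ^ (β - 2) * ((n:ℝ) - 1 + (β - 1) * (p - 1)) +
            ⟪B x, (κ * β * r ^ (β - 2)) • x⟫) + ϱ x * G ^ σ
      = G ^ θ * (κ * β * r ^ (β - 2) * A + ⟪B x, (κ * β * r ^ (β - 2)) • x⟫)
        + ϱ x * G ^ σ := by rw [hAdef]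
    _ ≤ G ^ θ * (κ * β * r ^ (β - 2) * A + b * G) + ρ₀ * G ^ σ := step1
    _ ≤ κ ^ θ * β ^ (1 + θ) * (A + b) + κ ^ θ * β ^ (1 + θ) * (β ^ (σ - (1 + θ)) * ρ₀) :=
        add_le_add key1 key2
    _ = κ ^ θ * β ^ (1 + θ) * M := by rw [hMdef]; ring
    _ < c₀ := key4


end
end

section
/- Let n ≥ 1, p ∈ (1, ∞), θ > 0, m ∈ [0, 1+θ), σ ∈ (θ, 1+θ), R > r > 0, x₀ ∈ ℝⁿ, and set β̂ = (2+θ)/(1+θ−m). Let c > 0 be the constant determined by c^{1+θ−m} β̂^{1+θ} [ (p−1)(β̂−1) + 1 ] = 1, and define on the annulus A = { x : r < |x−x₀| < R }: Φ(x) = c (|x−x₀| − r)^{β̂}, B(x) = −(n−1)(x−x₀)/|x−x₀|², and ϱ(x) = (cβ̂)^{1+θ−σ} (|x−x₀| − r)^{(β̂−1)(1+θ−σ) − 1}. Then for every x ∈ A one has ∇Φ(x) ≠ 0 and the pointwise identity |∇Φ(x)|^θ ( Δ_p^N Φ(x) + ⟨B(x), ∇Φ(x)⟩ ) + ϱ(x)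 |∇Φ(x)|^σ = Φ(x)^m. -/
open scoped RealInnerProductSpace
open Metric Filter

noncomputable section

variable {n : ℕ}

section Aux
variable {F : Type*} [NormedAddCommGroup F] [InnerProductSpace ℝ F]


lemma hasFDerivAt_norm_of_ne {x : F} (hx : x ≠ 0) :
    HasFDerivAt (‖·‖) (innerSL ℝ ((‖x‖⁻¹ : ℝ) • x)) x := by
  have hx2 : (0:ℝ) < ‖x‖ := norm_pos_iff.2 hx
  have h1 : HasFDerivAt (fun y : F => ‖y‖ ^ 2) (2 • (innerSL ℝ x)) x :=
    (hasStrictFDerivAt_norm_sq x).hasFDerivAt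
  have h2 : HasDerivAt Real.sqrt (1 / (2 * Real.sqrt (‖x‖ ^ 2))) (‖x‖ ^ 2) :=
    Real.hasDerivAt_sqrt (by positivity)
  have h3 := h2.comp_hasFDerivAt x h1
  rw [show Real.sqrt ∘ (fun y : F => ‖y‖ ^ 2) = fun y : F => ‖y‖ from
    funext fun y => Real.sqrt_sq (norm_nonneg y)] at h3
  refine h3.congr_fderiv ?_
  ext w
  rw [Real.sqrt_sq (norm_nonneg x)]
  simp [real_inner_smul_left]
  ring

lemma hasFDerivAt_norm_sub {x₀ x : F} (hx : x - x₀ ≠ 0) :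
    HasFDerivAt (fun y : F => ‖y - x₀‖) (innerSL ℝ ((‖x - x₀‖⁻¹ : ℝ) • (x - x₀))) x := by
  have h1 : HasFDerivAt (fun y : F => y - x₀) (ContinuousLinearMap.id ℝ F) x :=
    (hasFDerivAt_id x).sub_const x₀
  have := (hasFDerivAt_norm_of_ne hx).comp x h1
  exact this.congr_fderiv (by ext w; simp)

lemma radial_hasFDerivAt {x₀ x : F} {c β r : ℝ} (hr : 0 < r) (hs : 0 < ‖x - x₀‖ - r) :
    HasFDerivAt (fun y : F => c * (‖y - x₀‖ - r) ^ β)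
      ((c * β * (‖x - x₀‖ - r) ^ (β - 1)) • innerSL ℝ ((‖x - x₀‖⁻¹ : ℝ) • (x - x₀))) x := by
  have hvne : x - x₀ ≠ 0 := by
    intro h
    rw [h, norm_zero] at hs
    linarith
  have hn := hasFDerivAt_norm_sub hvne
  have hq :=
    (((hasDerivAt_id (‖x - x₀‖)).sub_const r).rpow_const (p := β) (Or.inl hs.ne')).const_mul c
  have := hq.comp_hasFDerivAt x hn
  refine this.congr_fderiv ?_
  ext w
  simp only [ContinuousLinearMap.smul_apply, id, smul_eq_mul]
  ring

lemma radial_hasGradientAt {x₀ x : F} [CompleteSpace F] {c β r : ℝ} (hr : 0 < r)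
    (hs : 0 < ‖x - x₀‖ - r) :
    HasGradientAt (fun y : F => c * (‖y - x₀‖ - r) ^ β)
      ((c * β * (‖x - x₀‖ - r) ^ (β - 1) / ‖x - x₀‖) • (x - x₀)) x := by
  rw [hasGradientAt_iff_hasFDerivAt]
  refine (radial_hasFDerivAt hr hs).congr_fderiv ?_
  ext w
  simp [InnerProductSpace.toDual_apply_apply, real_inner_smul_left]
  ring

lemma radial_grad_hasFDerivAt {x₀ x : F} {c β r : ℝ} (hr : 0 < r) (hs : 0 < ‖x - x₀‖ - r) :
    HasFDerivAt (fun y : F => (c * β * (‖y - x₀‖ - r) ^ (β - 1) / ‖y - x₀‖) • (y - x₀))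
      ((c * β * (‖x - x₀‖ - r) ^ (β - 1) / ‖x - x₀‖) • ContinuousLinearMap.id ℝ F
        + (((c * β * ((β - 1) * (‖x - x₀‖ - r) ^ (β - 2)) * ‖x - x₀‖
              - c * β * (‖x - x₀‖ - r) ^ (β - 1)) / ‖x - x₀‖ ^ 2)
            • innerSL ℝ ((‖x - x₀‖⁻¹ : ℝ) • (x - x₀))).smulRight (x - x₀)) x := by
  have hvne : x - x₀ ≠ 0 := by
    intro h; rw [h, norm_zero] at hs; linarith
  have ht : (0:ℝ) < ‖x - x₀‖ := norm_pos_iff.2 hvne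
  have hn := hasFDerivAt_norm_sub hvne
  have hf :=
    (((hasDerivAt_id (‖x - x₀‖)).sub_const r).rpow_const (p := β - 1) (Or.inl hs.ne')).const_mul
      (c * β)
  have hk := hf.div (hasDerivAt_id (‖x - x₀‖)) ht.ne'
  have hK : HasDerivAt (fun u : ℝ => c * β * (u - r) ^ (β - 1) / u)
      ((c * β * ((β - 1) * (‖x - x₀‖ - r) ^ (β - 2)) * ‖x - x₀‖
        - c * β * (‖x - x₀‖ - r) ^ (β - 1)) / ‖x - x₀‖ ^ 2) (‖x - x₀‖) := by
    refine hk.congr_deriv ?_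
    rw [show β - 2 = β - 1 - 1 by ring]
    simp
  have hkc := hK.comp_hasFDerivAt x hn
  have hid : HasFDerivAt (fun y : F => y - x₀) (ContinuousLinearMap.id ℝ F) x :=
    (hasFDerivAt_id x).sub_const x₀
  exact hkc.smul hid

end Aux


lemma trace_eq_sum_inner' {n : ℕ} (f : E n →L[ℝ] E n) :
    LinearMap.trace ℝ (E n) f.toLinearMap
      = ∑ i, ⟪(EuclideanSpace.basisFun (Fin n) ℝ) i, f ((EuclideanSpace.basisFun (Fin n) ℝ) i)⟫ := by
  classical
  set b := EuclideanSpace.basisFun (Fin n) ℝ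
  rw [LinearMap.trace_eq_matrix_trace ℝ b.toBasis, Matrix.trace]
  congr 1
  funext i
  rw [Matrix.diag_apply, LinearMap.toMatrix_apply, b.coe_toBasis,
    b.coe_toBasis_repr_apply, b.repr_apply_apply]
  rfl

/-- the Hénon-type radial profile. With `β̂ = (2+θ)/(1+θ−m)` and
`c > 0` determined by `c^{1+θ−m} β̂^{1+θ}[(p−1)(β̂−1)+1] = 1`, the profile
`Φ(x) = c(|x−x₀|−r)^{β̂}` satisfies, on the annulus `r < |x−x₀| < R`,
`∇Φ(x) ≠ 0` and `|∇Φ|^θ(Δ_p^N Φ + ⟨B(x),∇Φ⟩) + ϱ(x)|∇Φ|^σ = Φ^m`,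
where `B(x) = −(n−1)(x−x₀)/|x−x₀|²` and
`ϱ(x) = (cβ̂)^{1+θ−σ}(|x−x₀|−r)^{(β̂−1)(1+θ−σ)−1}`. -/
theorem henon_radial_profile_identity
    (n : ℕ) (hn : 1 ≤ n) (p θ σ m R r : ℝ) (x₀ : E n)
    (hp : 1 < p) (hθ : 0 < θ) (hm₀ : 0 ≤ m) (hm₁ : m < 1 + θ)
    (hσ₁ : θ < σ) (hσ₂ : σ < 1 + θ) (hr : 0 < r) (hR : r < R)
    (c : ℝ) (hc : 0 < c)
    (hceq : c ^ (1 + θ - m) * ((2 + θ) / (1 + θ - m)) ^ (1 + θ) *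
      ((p - 1) * ((2 + θ) / (1 + θ - m) - 1) + 1) = 1) :
    ∀ x : E n, r < ‖x - x₀‖ → ‖x - x₀‖ < R →
      gradient (fun y : E n => c * (‖y - x₀‖ - r) ^ ((2 + θ) / (1 + θ - m))) x ≠ 0 ∧
      ‖gradient (fun y : E n => c * (‖y - x₀‖ - r) ^ ((2 + θ) / (1 + θ - m))) x‖ ^ θ *
          (pLapN p (fun y : E n => c * (‖y - x₀‖ - r) ^ ((2 + θ) / (1 + θ - m))) x +
            ⟪(-((n : ℝ) - 1) / ‖x - x₀‖ ^ 2) • (x - x₀),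
              gradient (fun y : E n => c * (‖y - x₀‖ - r) ^ ((2 + θ) / (1 + θ - m))) x⟫) +
        (c * ((2 + θ) / (1 + θ - m))) ^ (1 + θ - σ) *
            (‖x - x₀‖ - r) ^ (((2 + θ) / (1 + θ - m) - 1) * (1 + θ - σ) - 1) *
          ‖gradient (fun y : E n => c * (‖y - x₀‖ - r) ^ ((2 + θ) / (1 + θ - m))) x‖ ^ σ =
        (c * (‖x - x₀‖ - r) ^ ((2 + θ) / (1 + θ - m))) ^ m := by
  intro x hx1 hx2
  have hD : (0:ℝ) < 1 + θ - m := by linarith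
  have hβ1 : 1 < (2 + θ) / (1 + θ - m) := by
    rw [lt_div_iff₀ hD]; linarith
  set β : ℝ := (2 + θ) / (1 + θ - m) with hβdef
  have hβ0 : (0:ℝ) < β := by linarith
  have hs : 0 < ‖x - x₀‖ - r := by linarith
  have hvne : x - x₀ ≠ 0 := by
    intro h; rw [h, norm_zero] at hx1; linarith
  have ht : (0:ℝ) < ‖x - x₀‖ := lt_trans hr hx1
  have hspos : (0:ℝ) < (‖x - x₀‖ - r) ^ (β - 1) := Real.rpow_pos_of_pos hs _
  set a : ℝ := c * β * (‖x - x₀‖ - r) ^ (β - 1) / ‖x - x₀‖ with hadef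
  have ha : 0 < a := by positivity
  set K : ℝ := (c * β * ((β - 1) * (‖x - x₀‖ - r) ^ (β - 2)) * ‖x - x₀‖
      - c * β * (‖x - x₀‖ - r) ^ (β - 1)) / ‖x - x₀‖ ^ 2 with hKdef
  have hgrad : gradient (fun y : E n => c * (‖y - x₀‖ - r) ^ β) x = a • (x - x₀) :=
    (radial_hasGradientAt hr hs).gradient
  have hgradne : a • (x - x₀) ≠ 0 := smul_ne_zero ha.ne' hvne
  refine ⟨by rw [hgrad]; exact hgradne, ?_⟩
  -- Hessian
  have hU : IsOpen {y : E n | r < ‖y - x₀‖} :=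
    isOpen_lt continuous_const ((continuous_id.sub continuous_const).norm)
  have heq : (gradient fun y : E n => c * (‖y - x₀‖ - r) ^ β)
      =ᶠ[nhds x] fun y : E n =>
        (c * β * (‖y - x₀‖ - r) ^ (β - 1) / ‖y - x₀‖) • (y - x₀) := by
    filter_upwards [hU.mem_nhds hx1] with y hy
    exact (radial_hasGradientAt hr (sub_pos.2 hy)).gradient
  have hessval : hess (fun y : E n => c * (‖y - x₀‖ - r) ^ β) x
      = (a • ContinuousLinearMap.id ℝ (E n)
        + (K • innerSL ℝ ((‖x - x₀‖⁻¹ : ℝ) • (x - x₀))).smulRight (x - x₀)) := by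
    rw [hess, heq.fderiv_eq]
    exact (radial_grad_hasFDerivAt hr hs).fderiv
  set H : E n →L[ℝ] E n := a • ContinuousLinearMap.id ℝ (E n)
      + (K • innerSL ℝ ((‖x - x₀‖⁻¹ : ℝ) • (x - x₀))).smulRight (x - x₀) with hHdef
  have happly : ∀ w : E n, H w = a • w + (K * ⟪(‖x - x₀‖⁻¹ : ℝ) • (x - x₀), w⟫) • (x - x₀) := by
    intro w
    simp only [hHdef, ContinuousLinearMap.add_apply, ContinuousLinearMap.smul_apply,
      ContinuousLinearMap.smulRight_apply, ContinuousLinearMap.id_apply, innerSL_apply_apply,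
      smul_eq_mul]
  -- Laplacian
  have hvv : ⟪x - x₀, x - x₀⟫ = ‖x - x₀‖ ^ 2 := real_inner_self_eq_norm_sq _
  have hlap : lap (fun y : E n => c * (‖y - x₀‖ - r) ^ β) x = a * n + K * ‖x - x₀‖ := by
    rw [lap, hessval, trace_eq_sum_inner']
    set b := EuclideanSpace.basisFun (Fin n) ℝ with hbdef
    have step1 : ∀ i : Fin n, ⟪b i, H (b i)⟫
        = a * ⟪b i, b i⟫ + K * (⟪(‖x - x₀‖⁻¹ : ℝ) • (x - x₀), b i⟫ * ⟪b i, x - x₀⟫) := by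
      intro i
      rw [happly (b i), inner_add_right, real_inner_smul_right, real_inner_smul_right]
      ring
    rw [show (∑ i, ⟪b i, H (b i)⟫) = _ from Finset.sum_congr rfl fun i _ => step1 i]
    rw [Finset.sum_add_distrib, ← Finset.mul_sum, ← Finset.mul_sum,
      b.sum_inner_mul_inner]
    have hbi : ∀ i : Fin n, ⟪b i, b i⟫ = 1 := by
      intro i
      rw [real_inner_self_eq_norm_sq, b.orthonormal.1 i]; norm_num
    have hone : (∑ _i : Fin n, (1:ℝ)) = (n:ℝ) := by simp
    rw [Finset.sum_congr rfl fun i _ => hbi i, hone, real_inner_smul_left, hvv]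
    rw [sq]
    field_simp
  -- inner products with the gradient
  have hHg : H (a • (x - x₀)) = (a * a + K * a * ‖x - x₀‖) • (x - x₀) := by
    rw [happly, real_inner_smul_right, real_inner_smul_left, hvv, smul_smul]
    rw [← add_smul]
    congr 1
    field_simp
  have hinner : ⟪H (a • (x - x₀)), a • (x - x₀)⟫
      = (a * a + K * a * ‖x - x₀‖) * a * ‖x - x₀‖ ^ 2 := by
    rw [hHg, real_inner_smul_left, real_inner_smul_right, hvv]; ring
  have hgn : ‖a • (x - x₀)‖ = a * ‖x - x₀‖ := by
    rw [norm_smul, Real.norm_eq_abs, abs_of_pos ha]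
  -- the drift term
  have hB : ⟪(-((n : ℝ) - 1) / ‖x - x₀‖ ^ 2) • (x - x₀), a • (x - x₀)⟫
      = -((n : ℝ) - 1) * a := by
    rw [real_inner_smul_left, real_inner_smul_right, hvv]
    field_simp
  -- assemble pLapN
  have hat : a * ‖x - x₀‖ = c * β * (‖x - x₀‖ - r) ^ (β - 1) := by
    rw [hadef]; field_simp
  have hsum : a + K * ‖x - x₀‖ = c * β * (β - 1) * (‖x - x₀‖ - r) ^ (β - 2) := by
    rw [hadef, hKdef]
    field_simp
    ring
  have hplap : pLapN p (fun y : E n => c * (‖y - x₀‖ - r) ^ β) x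
      + ⟪(-((n : ℝ) - 1) / ‖x - x₀‖ ^ 2) • (x - x₀),
          gradient (fun y : E n => c * (‖y - x₀‖ - r) ^ β) x⟫
      = (p - 1) * (c * β * (β - 1) * (‖x - x₀‖ - r) ^ (β - 2)) := by
    rw [pLapN, hgrad, hlap, hessval, hinner, hgn, hB, ← hsum]
    field_simp
    ring
  rw [hplap, hgrad, hgn, hat]
  -- final rpow algebra
  set s : ℝ := ‖x - x₀‖ - r with hsdef
  have hw : (0:ℝ) < c * β := by positivity
  have e1 : ∀ q : ℝ, (c * β * s ^ (β - 1)) ^ q = (c * β) ^ q * s ^ ((β - 1) * q) := by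
    intro q
    rw [Real.mul_rpow hw.le (Real.rpow_nonneg hs.le _), ← Real.rpow_mul hs.le]
  have e2 : (c * s ^ β) ^ m = c ^ m * s ^ (β * m) := by
    rw [Real.mul_rpow hc.le (Real.rpow_nonneg hs.le _), ← Real.rpow_mul hs.le]
  rw [e1 θ, e1 σ, e2]
  have hexp : β * m = (β - 1) * (1 + θ) - 1 := by
    rw [hβdef]
    field_simp
    ring
  have hcm : ((p - 1) * (β - 1) + 1) * ((c * β) ^ (1 + θ)) = c ^ m := by
    have h1 : (c * β) ^ ((1:ℝ) + θ) = c ^ ((1:ℝ) + θ) * β ^ ((1:ℝ) + θ) :=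
      Real.mul_rpow hc.le hβ0.le
    have h2 : c ^ ((1:ℝ) + θ) = c ^ m * c ^ (1 + θ - m) := by
      rw [← Real.rpow_add hc]
      ring_nf
    calc ((p - 1) * (β - 1) + 1) * ((c * β) ^ (1 + θ))
        = c ^ m * (c ^ (1 + θ - m) * β ^ (1 + θ) * ((p - 1) * (β - 1) + 1)) := by
          rw [h1, h2]; ring
      _ = c ^ m := by rw [hceq]; ring
  have f1 : (c * β) ^ θ * (c * β) = (c * β) ^ ((1:ℝ) + θ) := by
    rw [Real.rpow_add hw, Real.rpow_one]; ring
  have f2 : (c * β) ^ (1 + θ - σ) * (c * β) ^ σ = (c * β) ^ ((1:ℝ) + θ) := by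
    rw [← Real.rpow_add hw]; ring_nf
  have g1 : s ^ ((β - 1) * θ) * s ^ (β - 2) = s ^ ((β - 1) * (1 + θ) - 1) := by
    rw [← Real.rpow_add hs, show (β - 1) * θ + (β - 2) = (β - 1) * (1 + θ) - 1 from by ring]
  have g2 : s ^ ((β - 1) * (1 + θ - σ) - 1) * s ^ ((β - 1) * σ)
      = s ^ ((β - 1) * (1 + θ) - 1) := by
    rw [← Real.rpow_add hs,
      show (β - 1) * (1 + θ - σ) - 1 + (β - 1) * σ = (β - 1) * (1 + θ) - 1 from by ring]
  rw [hexp, ← hcm]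
  linear_combination
    ((p - 1) * (β - 1) * (s ^ ((β - 1) * θ) * s ^ (β - 2))) * f1
    + ((p - 1) * (β - 1) * ((c * β) ^ ((1:ℝ) + θ))) * g1
    + (s ^ ((β - 1) * (1 + θ - σ) - 1) * s ^ ((β - 1) * σ)) * f2
    + ((c * β) ^ ((1:ℝ) + θ)) * g2


end
end
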